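/- arXiv:math/0110243 — 3 statements merged into one kernel-verified Lean document; each statement's English description precedes it below -/
import Mathlib

section
/- Let k be a field of characteristic ≠ 2 and σ the involution of k((T)) with σ(T) = -T. Every p ∈ k((T))^× satisfying p·σ(p) = 1 is of the form p = ε · s/σ(s) for some sign ε ∈ {1, -1} and some unit s of k[[T]]. -/
/-- Let `char k ≠ 2` and `σ` be the involution of `k((T))` with `σ(T) = -T`. Every
`p ∈ k((T))ˣ` with `p · σ(p) = 1` is of the form `p = ε · s / σ(s)` for some sign
`ε ∈ {1, -1}` and some unit `s` of `k[[T]]`. -/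
theorem norm_one_iff_ratio (k : Type*) [Field k] (h2 : (2 : k) ≠ 0)
    (σ : LaurentSeries k ≃ₐ[k] LaurentSeries k)
    (hσ : ∀ (r : LaurentSeries k) (n : ℤ), (σ r).coeff n = (-1 : k) ^ n * r.coeff n)
    (p : LaurentSeries k) (hp0 : p ≠ 0) (hp : p * σ p = 1) :
    ∃ (ε : LaurentSeries k) (s : (PowerSeries k)ˣ), (ε = 1 ∨ ε = -1) ∧
      p = ε * (HahnSeries.ofPowerSeries ℤ k (s : PowerSeries k) /
        σ (HahnSeries.ofPowerSeries ℤ k (s : PowerSeries k))) := by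
  have hσp0 : σ p ≠ 0 := by
    intro h
    rw [h, mul_zero] at hp
    exact one_ne_zero hp.symm
  have hsign : ∀ n : ℤ, (-1 : k) ^ n * (-1 : k) ^ n = 1 := by
    intro n
    rw [← zpow_add₀ (by norm_num : (-1 : k) ≠ 0), ← two_mul, zpow_mul]
    norm_num
  have hinv : ∀ n : ℤ, p.coeff n = (-1 : k) ^ n * (σ p).coeff n := by
    intro n
    rw [hσ, ← mul_assoc, hsign n, one_mul]
  -- orders agree
  have hord : (σ p).order = p.order := by
    apply le_antisymm
    · by_contra h
      push_neg at h
      exact (mt HahnSeries.coeff_order_eq_zero.mp hp0)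
        (by rw [hinv, HahnSeries.coeff_eq_zero_of_lt_order h, mul_zero])
    · by_contra h
      push_neg at h
      exact (mt HahnSeries.coeff_order_eq_zero.mp hσp0)
        (by rw [hσ, HahnSeries.coeff_eq_zero_of_lt_order h, mul_zero])
  have horder : p.order = 0 := by
    have h1 : (p * σ p).order = p.order + (σ p).order := HahnSeries.order_mul hp0 hσp0
    rw [hp, hord, HahnSeries.order_one] at h1
    omega
  have hordσ : (σ p).order = 0 := by rw [hord, horder]
  -- p and σ p are power series
  have hu : HahnSeries.ofPowerSeries ℤ k p.powerSeriesPart = p := by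
    rw [LaurentSeries.ofPowerSeries_powerSeriesPart, horder, neg_zero]
    simp
  have hv : HahnSeries.ofPowerSeries ℤ k (σ p).powerSeriesPart = σ p := by
    rw [LaurentSeries.ofPowerSeries_powerSeriesPart, hordσ, neg_zero]
    simp
  set u := p.powerSeriesPart with hu'
  set v := (σ p).powerSeriesPart with hv'
  have huv : u * v = 1 := by
    apply HahnSeries.ofPowerSeries_injective (Γ := ℤ) (R := k)
    rw [map_mul, hu, hv, hp, map_one]
  set ε := PowerSeries.constantCoeff (R := k) u with hε'
  have hεu : ε = p.coeff 0 := by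
    rw [hε', ← PowerSeries.coeff_zero_eq_constantCoeff_apply, hu',
      LaurentSeries.powerSeriesPart_coeff, horder]
    norm_num
  have hεv : PowerSeries.constantCoeff (R := k) v = ε := by
    rw [← PowerSeries.coeff_zero_eq_constantCoeff_apply, hv',
      LaurentSeries.powerSeriesPart_coeff, hordσ, hεu]
    have := hσ p 0
    simpa using this
  have hε2 : ε * ε = 1 := by
    have := congrArg (PowerSeries.constantCoeff (R := k)) huv
    rw [map_mul, map_one, hεv] at this
    exact this
  have hεor : ε = 1 ∨ ε = -1 := mul_self_eq_one_iff.mp hε2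
  -- the unit s
  set s' : PowerSeries k := 1 + PowerSeries.C (R := k) ε * u with hs'
  have hconst : PowerSeries.constantCoeff (R := k) s' = 2 := by
    rw [hs', map_add, map_one, map_mul, PowerSeries.constantCoeff_C, ← hε', hε2]
    norm_num
  have hsu : IsUnit s' := PowerSeries.isUnit_iff_constantCoeff.mpr
    (by rw [hconst]; exact isUnit_iff_ne_zero.mpr h2)
  -- the Laurent series constant ε'
  set ε' : LaurentSeries k := HahnSeries.C ε with hε'def
  have hσε : σ ε' = ε' := by
    ext n
    rw [hσ, hε'def, HahnSeries.C_apply]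
    rcases eq_or_ne n 0 with rfl | hn
    · simp
    · simp [HahnSeries.coeff_single_of_ne hn]
  have hεsq : ε' * ε' = 1 := by rw [hε'def, ← map_mul, hε2, map_one]
  have hS : HahnSeries.ofPowerSeries ℤ k s' = 1 + ε' * p := by
    rw [hs', map_add, map_one, map_mul, hu, HahnSeries.ofPowerSeries_C, hε'def]
  have hσS : σ (HahnSeries.ofPowerSeries ℤ k s') = 1 + ε' * σ p := by
    rw [hS, map_add, map_one, map_mul, hσε]
  have hS0 : HahnSeries.ofPowerSeries ℤ k s' ≠ 0 := by
    intro h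
    have : s' = 0 := HahnSeries.ofPowerSeries_injective (by rw [h, map_zero])
    rw [this, map_zero] at hconst
    exact h2 hconst.symm
  have hσS0 : σ (HahnSeries.ofPowerSeries ℤ k s') ≠ 0 := by
    intro h
    exact hS0 (σ.injective (by rw [h, map_zero]))
  refine ⟨ε', hsu.unit, ?_, ?_⟩
  · rcases hεor with h | h
    · left; rw [hε'def, h, map_one]
    · right; rw [hε'def, h, map_neg, map_one]
  · rw [IsUnit.unit_spec, eq_comm, mul_div_assoc', div_eq_iff hσS0, hσS, hS]
    linear_combination p * hεsq - ε' * hp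
end

section
/- Let k be a field of characteristic ≠ 2 and σ the involution of k((T)) with σ(T) = -T. Let N = {p ∈ k((T))^× : p·σ(p) = 1} and B = {s/σ(s) : s ∈ k[[T]]^×}. Then B is a subgroup of N, and the quotient group N/B is cyclic of order 2, generated by the class of -1. -/
set_option maxHeartbeats 1000000 in
/-- Let `char k ≠ 2`, `σ` the involution of `k((T))` with `σ(T) = -T` (acting on units via
`σu`). Then `N = {p : p·σ(p) = 1}` and `B = {s/σ(s) : s ∈ k[[T]]ˣ}` are subgroups of
`k((T))ˣ` with `B ≤ N`, and the quotient `N/B` is cyclic of order 2, generated by the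
class of `-1`: the class of `-1` is nontrivial, its square is trivial, and every element
of `N` lies in `B` or in `(-1)·B`. -/
theorem norm_one_mod_coboundaries (k : Type*) [Field k] (h2 : (2 : k) ≠ 0)
    (σ : LaurentSeries k ≃ₐ[k] LaurentSeries k)
    (hσ : ∀ (r : LaurentSeries k) (n : ℤ), (σ r).coeff n = (-1 : k) ^ n * r.coeff n)
    (σu : (LaurentSeries k)ˣ →* (LaurentSeries k)ˣ)
    (hσu : ∀ p : (LaurentSeries k)ˣ, ((σu p : (LaurentSeries k)ˣ) : LaurentSeries k) = σ p) :
    ∃ (N B : Subgroup (LaurentSeries k)ˣ),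
      (N : Set (LaurentSeries k)ˣ) = {p | p * σu p = 1} ∧
      (B : Set (LaurentSeries k)ˣ) = {p : (LaurentSeries k)ˣ | ∃ s : (PowerSeries k)ˣ,
        (p : LaurentSeries k) = HahnSeries.ofPowerSeries ℤ k (s : PowerSeries k) /
          σ (HahnSeries.ofPowerSeries ℤ k (s : PowerSeries k))} ∧
      B ≤ N ∧
      ∃ m : (LaurentSeries k)ˣ, (m : LaurentSeries k) = -1 ∧ m ∈ N ∧ m ∉ B ∧ m * m ∈ B ∧
        ∀ p ∈ N, p ∈ B ∨ ∃ b ∈ B, p = m * b := by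
  classical
  have hm1 : (-1 : k) ≠ 0 := neg_ne_zero.mpr one_ne_zero
  -- σ is an involution
  have hs2 : ∀ x : LaurentSeries k, σ (σ x) = x := by
    intro x
    ext n
    rw [hσ, hσ, ← mul_assoc, ← mul_zpow, neg_mul_neg, one_mul, one_zpow, one_mul]
  have hσ0 : ∀ x : LaurentSeries k, x ≠ 0 → σ x ≠ 0 := by
    intro x hx h
    exact hx (by simpa using σ.injective (h.trans (map_zero σ).symm))
  -- σ preserves order
  have horder : ∀ x : LaurentSeries k, x ≠ 0 → (σ x).order = x.order := by
    intro x hx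
    have hsx : σ x ≠ 0 := hσ0 x hx
    apply le_antisymm
    · apply HahnSeries.order_le_of_coeff_ne_zero
      rw [hσ]
      exact mul_ne_zero (zpow_ne_zero _ hm1) (HahnSeries.coeff_order_eq_zero.not.mpr hx)
    · conv_lhs => rw [← hs2 x]
      apply HahnSeries.order_le_of_coeff_ne_zero
      rw [hσ]
      exact mul_ne_zero (zpow_ne_zero _ hm1) (HahnSeries.coeff_order_eq_zero.not.mpr hsx)
  set g : (LaurentSeries k)ˣ →* (LaurentSeries k)ˣ :=
    MonoidHom.mk' (fun p => p * σu p)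
      (fun a b => by rw [map_mul]; exact mul_mul_mul_comm a b (σu a) (σu b)) with hg
  set N : Subgroup (LaurentSeries k)ˣ := g.ker with hN
  set ι : (PowerSeries k)ˣ →* (LaurentSeries k)ˣ :=
    Units.map (HahnSeries.ofPowerSeries ℤ k).toMonoidHom with hι
  set φ : (PowerSeries k)ˣ →* (LaurentSeries k)ˣ :=
    MonoidHom.mk' (fun s => ι s / σu (ι s))
      (fun a b => by rw [map_mul, map_mul]; exact (div_mul_div_comm (ι a) (σu (ι a)) (ι b) (σu (ι b))).symm) with hφ
  set B : Subgroup (LaurentSeries k)ˣ := φ.range with hB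
  have hιval : ∀ s : (PowerSeries k)ˣ,
      ((ι s : (LaurentSeries k)ˣ) : LaurentSeries k)
        = HahnSeries.ofPowerSeries ℤ k (s : PowerSeries k) := fun s => rfl
  have hφval : ∀ s : (PowerSeries k)ˣ,
      ((φ s : (LaurentSeries k)ˣ) : LaurentSeries k)
        = HahnSeries.ofPowerSeries ℤ k (s : PowerSeries k) /
          σ (HahnSeries.ofPowerSeries ℤ k (s : PowerSeries k)) := by
    intro s
    show ((ι s / σu (ι s) : (LaurentSeries k)ˣ) : LaurentSeries k) = _
    rw [Units.val_div_eq_div_val, hσu, hιval]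
  have hmemN : ∀ p : (LaurentSeries k)ˣ,
      p ∈ N ↔ (p : LaurentSeries k) * σ (p : LaurentSeries k) = 1 := by
    intro p
    rw [hN, MonoidHom.mem_ker]
    show p * σu p = 1 ↔ _
    constructor
    · intro h
      have := congrArg (Units.val) h
      rwa [Units.val_mul, hσu, Units.val_one] at this
    · intro h
      exact Units.ext (by rwa [Units.val_mul, hσu, Units.val_one])
  -- constant coefficient of power series units is nonzero
  have hconst : ∀ s : (PowerSeries k)ˣ,
      PowerSeries.constantCoeff (s : PowerSeries k) ≠ 0 := by
    intro s
    exact (PowerSeries.isUnit_iff_constantCoeff.mp s.isUnit).ne_zero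
  have hcoeff0 : ∀ s : (PowerSeries k)ˣ,
      (HahnSeries.ofPowerSeries ℤ k (s : PowerSeries k)).coeff 0
        = PowerSeries.constantCoeff (s : PowerSeries k) := by
    intro s
    have := HahnSeries.ofPowerSeries_apply_coeff (Γ := ℤ) (s : PowerSeries k) 0
    simpa using this
  -- order is zero for norm-one elements
  have hord0 : ∀ p : (LaurentSeries k)ˣ,
      (p : LaurentSeries k) * σ (p : LaurentSeries k) = 1 →
      (p : LaurentSeries k).order = 0 := by
    intro p hp
    have hpne : (p : LaurentSeries k) ≠ 0 := Units.ne_zero p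
    have hspne : σ (p : LaurentSeries k) ≠ 0 := hσ0 _ hpne
    have h := HahnSeries.order_mul hpne hspne
    rw [hp, horder _ hpne, HahnSeries.order_one] at h
    omega
  -- coeff 0 of norm-one elements squares to 1
  have hc2 : ∀ p : (LaurentSeries k)ˣ,
      (p : LaurentSeries k) * σ (p : LaurentSeries k) = 1 →
      (p : LaurentSeries k).coeff 0 * (p : LaurentSeries k).coeff 0 = 1 := by
    intro p hp
    have hpne : (p : LaurentSeries k) ≠ 0 := Units.ne_zero p
    have hspne : σ (p : LaurentSeries k) ≠ 0 := hσ0 _ hpne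
    have hord := hord0 p hp
    have hords : (σ (p : LaurentSeries k)).order = 0 := by rw [horder _ hpne, hord]
    have h := HahnSeries.coeff_mul_order_add_order (p : LaurentSeries k)
      (σ (p : LaurentSeries k))
    rw [hp, hord, hords, add_zero] at h
    have hl : (p : LaurentSeries k).leadingCoeff = (p : LaurentSeries k).coeff 0 := by
      rw [HahnSeries.leadingCoeff_eq, hord]
    have hls : (σ (p : LaurentSeries k)).leadingCoeff
        = (p : LaurentSeries k).coeff 0 := by
      rw [HahnSeries.leadingCoeff_eq, hords, hσ]
      simp
    rw [hl, hls] at h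
    simpa using h.symm
  -- σ fixes constants
  have hσC : ∀ c : k, σ (HahnSeries.C c : LaurentSeries k) = HahnSeries.C c := by
    intro c
    ext n
    rw [hσ]
    by_cases hn : n = 0
    · subst hn; simp [HahnSeries.C_apply]
    · simp [HahnSeries.C_apply, HahnSeries.coeff_single_of_ne hn]
  -- key lemma: norm one and constant coeff 1 implies coboundary
  have key : ∀ p : (LaurentSeries k)ˣ,
      (p : LaurentSeries k) * σ (p : LaurentSeries k) = 1 →
      (p : LaurentSeries k).coeff 0 = 1 → p ∈ B := by
    intro p hp hc
    set P : LaurentSeries k := (p : LaurentSeries k) with hP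
    have hpne : P ≠ 0 := Units.ne_zero p
    have hord : P.order = 0 := hord0 p hp
    set u : PowerSeries k := P.powerSeriesPart with hu
    have hup : HahnSeries.ofPowerSeries ℤ k u = P := by
      rw [hu, LaurentSeries.ofPowerSeries_powerSeriesPart, hord, neg_zero,
        HahnSeries.single_zero_one, one_mul]
    have hcu : PowerSeries.constantCoeff u = 1 := by
      have h0 := LaurentSeries.powerSeriesPart_coeff P 0
      rw [hord, Nat.cast_zero, add_zero, hc] at h0
      rw [hu, ← PowerSeries.coeff_zero_eq_constantCoeff]
      exact h0
    set s : PowerSeries k := PowerSeries.C ((2 : k)⁻¹) * (1 + u) with hs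
    have hcs : PowerSeries.constantCoeff s = 1 := by
      rw [hs]
      simp [hcu, one_add_one_eq_two, inv_mul_cancel₀ h2]
    have hsu : IsUnit s := PowerSeries.isUnit_iff_constantCoeff.mpr (by rw [hcs]; exact isUnit_one)
    refine ⟨hsu.unit, ?_⟩
    apply Units.ext
    rw [hφval, IsUnit.unit_spec]
    -- compute the image
    have ha : HahnSeries.ofPowerSeries ℤ k s
        = HahnSeries.C ((2:k)⁻¹) * (1 + P) := by
      rw [hs, map_mul, map_add, map_one, hup, HahnSeries.ofPowerSeries_C]
    have hσP : σ P = P⁻¹ := eq_inv_of_mul_eq_one_left (by rw [mul_comm]; exact hp)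
    have hσa : σ (HahnSeries.ofPowerSeries ℤ k s)
        = HahnSeries.C ((2:k)⁻¹) * (1 + P⁻¹) := by
      rw [ha, map_mul, map_add, map_one, hσC, hσP]
    have hCne : (HahnSeries.C ((2:k)⁻¹) : LaurentSeries k) ≠ 0 :=
      HahnSeries.C_ne_zero (inv_ne_zero h2)
    have h1P : (1 : LaurentSeries k) + P ≠ 0 := by
      intro h
      have h0 : ((1 : LaurentSeries k) + P).coeff 0 = 2 := by
        simp [hc, one_add_one_eq_two]
      rw [h, HahnSeries.coeff_zero] at h0
      exact h2 h0.symm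
    rw [hσa, ha, mul_div_mul_left _ _ hCne]
    have hrw : (1 : LaurentSeries k) + P⁻¹ = (1 + P) * P⁻¹ := by
      rw [add_mul, one_mul, mul_inv_cancel₀ hpne, add_comm]
    rw [hrw, div_eq_iff (mul_ne_zero h1P (inv_ne_zero hpne)), ← hP,
      mul_comm (1 + P) P⁻¹, ← mul_assoc, mul_inv_cancel₀ hpne, one_mul]
  -- the minus one unit
  set m : (LaurentSeries k)ˣ := -1 with hm
  have hmval : (m : LaurentSeries k) = -1 := by rw [hm, Units.val_neg, Units.val_one]
  have hmN : m ∈ N := by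
    rw [hmemN, hmval, map_neg, map_one]
    ring
  have hmm : m * m = 1 := by
    apply Units.ext
    rw [Units.val_mul, hmval, Units.val_one]
    ring
  refine ⟨N, B, ?_, ?_, ?_, m, hmval, hmN, ?_, ?_, ?_⟩
  · ext p
    simp only [SetLike.mem_coe, Set.mem_setOf_eq, hN, MonoidHom.mem_ker]
    rfl
  · ext p
    simp only [SetLike.mem_coe, Set.mem_setOf_eq, hB, MonoidHom.mem_range]
    constructor
    · rintro ⟨s, rfl⟩
      exact ⟨s, (hφval s)⟩
    · rintro ⟨s, hsval⟩
      exact ⟨s, Units.ext ((hφval s).trans hsval.symm)⟩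
  · rintro x ⟨s, rfl⟩
    rw [hmemN, hφval]
    have hane : HahnSeries.ofPowerSeries ℤ k (s : PowerSeries k) ≠ 0 := by
      rw [← hιval]; exact Units.ne_zero (ι s)
    have hsane : σ (HahnSeries.ofPowerSeries ℤ k (s : PowerSeries k)) ≠ 0 := hσ0 _ hane
    rw [map_div₀, hs2, div_mul_div_comm,
      mul_comm (σ (HahnSeries.ofPowerSeries ℤ k (s : PowerSeries k)))
        (HahnSeries.ofPowerSeries ℤ k (s : PowerSeries k))]
    exact div_self (mul_ne_zero hane hsane)
  · rintro ⟨s, hsm⟩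
    have h := congrArg Units.val hsm
    rw [hφval, hmval] at h
    set a : LaurentSeries k := HahnSeries.ofPowerSeries ℤ k (s : PowerSeries k) with haa
    have hane : a ≠ 0 := by rw [haa, ← hιval]; exact Units.ne_zero (ι s)
    have hsane : σ a ≠ 0 := hσ0 _ hane
    have ha' : a = -σ a := by
      rw [div_eq_iff hsane] at h
      linear_combination h
    have hca : a.coeff 0 ≠ 0 := by rw [haa, hcoeff0]; exact hconst s
    have hcsa : (σ a).coeff 0 = a.coeff 0 := by rw [hσ]; simp
    have : a.coeff 0 = -(a.coeff 0) := by
      conv_lhs => rw [ha']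
      rw [HahnSeries.coeff_neg, hcsa]
    have h20 : (2 : k) * a.coeff 0 = 0 := by rw [two_mul]; linear_combination this
    rcases mul_eq_zero.mp h20 with h' | h'
    · exact h2 h'
    · exact hca h'
  · rw [hmm]
    exact one_mem B
  · intro p hpN
    have hp : (p : LaurentSeries k) * σ (p : LaurentSeries k) = 1 := (hmemN p).mp hpN
    have hcc := hc2 p hp
    rcases mul_self_eq_one_iff.mp hcc with hc1 | hcm1
    · exact Or.inl (key p hp hc1)
    · right
      have hq : m * p ∈ N := N.mul_mem hmN hpN
      have hqval : ((m * p : (LaurentSeries k)ˣ) : LaurentSeries k)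
          = -(p : LaurentSeries k) := by rw [Units.val_mul, hmval]; ring
      have hqn : ((m * p : (LaurentSeries k)ˣ) : LaurentSeries k) *
          σ ((m * p : (LaurentSeries k)ˣ) : LaurentSeries k) = 1 := (hmemN _).mp hq
      have hqc : ((m * p : (LaurentSeries k)ˣ) : LaurentSeries k).coeff 0 = 1 := by
        rw [hqval, HahnSeries.coeff_neg, hcm1]; ring
      refine ⟨m * p, key _ hqn hqc, ?_⟩
      rw [← mul_assoc, hmm, one_mul]
end

section
/- Let R be a semilocal commutative ring (a commutative ring with only finitely many maximal ideals). Then the Picard group Pic(R) is trivial. -/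
open TensorProduct

/-- Nakayama-type lemma: a submodule of a finite module which is full modulo
`m • ⊤` for every maximal ideal `m` is the whole module. -/
lemma aux_nakayama {R : Type*} [CommRing R] {M : Type*} [AddCommGroup M] [Module R M]
    [Module.Finite R M] (N : Submodule R M)
    (h : ∀ m : Ideal R, m.IsMaximal → N ⊔ m • (⊤ : Submodule R M) = ⊤) : N = ⊤ := by
  by_contra hN
  have hns : ¬ Subsingleton (M ⧸ N) := fun hs => hN (Submodule.Quotient.subsingleton_iff.1 hs)
  set Q := M ⧸ N
  set Ann : Ideal R := (⊤ : Submodule R Q).annihilator with hAnn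
  have hAnnTop : Ann ≠ ⊤ := by
    intro htop
    apply hns
    constructor
    intro a b
    have h1 : (1 : R) ∈ Ann := htop.ge Submodule.mem_top
    rw [Submodule.mem_annihilator] at h1
    calc a = (1 : R) • a := (one_smul R a).symm
      _ = 0 := h1 a Submodule.mem_top
      _ = (1 : R) • b := (h1 b Submodule.mem_top).symm
      _ = b := one_smul R b
  obtain ⟨m, hm, hAm⟩ := Ideal.exists_le_maximal Ann hAnnTop
  have hsmul : (⊤ : Submodule R Q) ≤ m • ⊤ := by
    have := congrArg (Submodule.map N.mkQ) (h m hm)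
    rw [Submodule.map_sup, Submodule.map_smul'', Submodule.map_top, Submodule.range_mkQ] at this
    rw [Submodule.mkQ_map_self, bot_sup_eq] at this
    exact this.ge
  obtain ⟨r, hr1, hr0⟩ := Submodule.exists_sub_one_mem_and_smul_eq_zero_of_fg_of_le_smul m
    (⊤ : Submodule R Q) (Module.Finite.fg_top) hsmul
  have hrAnn : r ∈ Ann := Submodule.mem_annihilator.2 fun q hq => hr0 q hq
  have hrm : r ∈ m := hAm hrAnn
  have : (1 : R) ∈ m := by simpa using m.sub_mem hrm hr1
  exact hm.ne_top ((Ideal.eq_top_iff_one m).2 this)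

set_option maxHeartbeats 1000000 in
/-- Over the residue field at `m`, an invertible module has rank one; hence any
element of `M` outside `m • ⊤` generates `M` modulo `m • ⊤`. -/
lemma aux_span {R : Type u} [CommRing R] {M : Type v} [AddCommGroup M] [Module R M]
    {M' : Type w} [AddCommGroup M'] [Module R M'] (e0 : (M ⊗[R] M') ≃ₗ[R] R)
    (m : Ideal R) [hm : m.IsMaximal] {x : M} (hx : x ∉ m • (⊤ : Submodule R M)) (y : M) :
    ∃ r : R, y - r • x ∈ m • (⊤ : Submodule R M) := by
  letI k := R ⧸ m
  letI : Field k := Ideal.Quotient.field m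
  have h1 : ∀ z : M, ((1 : k) ⊗ₜ[R] z = (0 : k ⊗[R] M)) ↔ z ∈ m • (⊤ : Submodule R M) := by
    intro z
    have hφ : (TensorProduct.quotTensorEquivQuotSMul M m) ((1 : k) ⊗ₜ[R] z)
        = Submodule.Quotient.mk z := by
      have := TensorProduct.quotTensorEquivQuotSMul_mk_tmul (M := M) m 1 z
      simpa [one_smul] using this
    constructor
    · intro h
      have := congrArg (TensorProduct.quotTensorEquivQuotSMul M m) h
      rw [hφ, map_zero] at this
      exact (Submodule.Quotient.mk_eq_zero _).1 this
    · intro h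
      have h2 : (TensorProduct.quotTensorEquivQuotSMul M m) ((1 : k) ⊗ₜ[R] z) = 0 := by
        rw [hφ]; exact (Submodule.Quotient.mk_eq_zero _).2 h
      simpa using (TensorProduct.quotTensorEquivQuotSMul M m).map_eq_zero_iff.1 h2
  let E : ((k ⊗[R] M) ⊗[k] (k ⊗[R] M')) ≃ₗ[k] k :=
    (TensorProduct.AlgebraTensorModule.distribBaseChange R k M M').symm ≪≫ₗ
      TensorProduct.AlgebraTensorModule.congr (LinearEquiv.refl k k) e0 ≪≫ₗ
      TensorProduct.AlgebraTensorModule.rid R k k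
  have hrank := rank_tensorProduct (R := k) (S := k) (M := k ⊗[R] M) (M' := k ⊗[R] M')
  have hone : Module.rank k ((k ⊗[R] M) ⊗[k] (k ⊗[R] M')) = 1 := by
    simpa using E.lift_rank_eq
  rw [hone] at hrank
  have hW0 : Cardinal.lift.{max u v} (Module.rank k (k ⊗[R] M')) ≠ 0 := by
    intro h0
    rw [h0, mul_zero] at hrank
    exact (one_ne_zero : (1 : Cardinal) ≠ 0) hrank
  have hV1 : Module.rank k (k ⊗[R] M) ≤ 1 := by
    have hle : Cardinal.lift.{max u w} (Module.rank k (k ⊗[R] M)) ≤ 1 := by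
      calc Cardinal.lift.{max u w} (Module.rank k (k ⊗[R] M))
          = Cardinal.lift.{max u w} (Module.rank k (k ⊗[R] M)) * 1 := (mul_one _).symm
        _ ≤ Cardinal.lift.{max u w} (Module.rank k (k ⊗[R] M)) *
              Cardinal.lift.{max u v} (Module.rank k (k ⊗[R] M')) :=
            mul_le_mul_right (Cardinal.one_le_iff_ne_zero.2 hW0) _
        _ = 1 := hrank.symm
    rwa [show (1 : Cardinal.{max u v w}) = Cardinal.lift.{max u w} (1 : Cardinal.{max u v}) from
      Cardinal.lift_one.symm, Cardinal.lift_le] at hle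
  obtain ⟨v₀, hv₀⟩ := rank_le_one_iff.1 hV1
  have hxV : ((1 : k) ⊗ₜ[R] x : k ⊗[R] M) ≠ 0 := fun h => hx ((h1 x).1 h)
  obtain ⟨r₀, hr₀⟩ := hv₀ ((1 : k) ⊗ₜ[R] x)
  have hr₀0 : r₀ ≠ 0 := by rintro rfl; rw [zero_smul] at hr₀; exact hxV hr₀.symm
  obtain ⟨c, hc⟩ := hv₀ ((1 : k) ⊗ₜ[R] y)
  obtain ⟨r, hr⟩ := Ideal.Quotient.mk_surjective (I := m) (c * r₀⁻¹)
  refine ⟨r, (h1 _).1 ?_⟩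
  have key : ((1 : k) ⊗ₜ[R] y : k ⊗[R] M) = (c * r₀⁻¹) • ((1 : k) ⊗ₜ[R] x) := by
    rw [← hr₀, ← hc, smul_smul, mul_assoc, inv_mul_cancel₀ hr₀0, mul_one]
  have hsm : r • ((1 : k) ⊗ₜ[R] x : k ⊗[R] M) = (c * r₀⁻¹) • ((1 : k) ⊗ₜ[R] x) := by
    rw [← hr, ← Ideal.Quotient.algebraMap_eq, algebraMap_smul]
  rw [TensorProduct.tmul_sub, TensorProduct.tmul_smul, hsm, ← key, sub_self]

/-- Over a semilocal commutative ring `R` (finitely many maximal ideals), every invertible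
module (finitely generated projective `M` with `M ⊗ M' ≅ R` for some `M'`) is free of
rank one; equivalently `Pic(R)` is trivial. -/
theorem pic_semilocal_trivial (R : Type*) [CommRing R]
    (hsemi : {I : Ideal R | I.IsMaximal}.Finite)
    (M : Type*) [AddCommGroup M] [Module R M] [Module.Finite R M] [Module.Projective R M]
    (M' : Type*) [AddCommGroup M'] [Module R M']
    (e : Nonempty ((M ⊗[R] M') ≃ₗ[R] R)) :
    Nonempty (M ≃ₗ[R] R) := by
  classical
  obtain ⟨e0⟩ := e
  set S := hsemi.toFinset with hS
  have hmem : ∀ m : Ideal R, m ∈ S ↔ m.IsMaximal := fun m => hsemi.mem_toFinset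
  -- `M ≠ m • M` for every maximal ideal `m`
  have hproper : ∀ m : Ideal R, m.IsMaximal → m • (⊤ : Submodule R M) ≠ ⊤ := by
    intro m hm htop
    have h2 : (⊤ : Submodule R (M ⊗[R] M')) ≤ m • ⊤ := by
      intro z hz
      clear hz
      induction z using TensorProduct.induction_on with
      | zero => exact Submodule.zero_mem _
      | tmul a b =>
          have ha : a ∈ m • (⊤ : Submodule R M) := htop.ge Submodule.mem_top
          refine Submodule.smul_induction_on ha ?_ ?_
          · intro r hr n _
            rw [← TensorProduct.smul_tmul']
            exact Submodule.smul_mem_smul hr Submodule.mem_top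
          · intro u v hu hv
            rw [TensorProduct.add_tmul]
            exact Submodule.add_mem _ hu hv
      | add u v hu hv => exact Submodule.add_mem _ hu hv
    have h2' : (⊤ : Submodule R (M ⊗[R] M')) = m • ⊤ := le_antisymm h2 le_top
    have h3 : (⊤ : Submodule R R) = m • ⊤ := by
      have := congrArg (Submodule.map (e0 : M ⊗[R] M' →ₗ[R] R)) h2'
      rwa [Submodule.map_smul'', Submodule.map_top, LinearEquiv.range] at this
    have h1m : (1 : R) ∈ m • (⊤ : Submodule R R) := h3 ▸ Submodule.mem_top
    have hle : m • (⊤ : Submodule R R) ≤ m := Submodule.smul_le.2 fun r hr n _ => by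
      simpa [smul_eq_mul] using m.mul_mem_right n hr
    exact hm.ne_top ((Ideal.eq_top_iff_one m).2 (hle h1m))
  -- choose a nonzero element mod each maximal ideal
  have hy' : ∀ m : Ideal R, ∃ z : M, m.IsMaximal → z ∉ m • (⊤ : Submodule R M) := by
    intro m
    by_cases hm : m.IsMaximal
    · have hne := hproper m hm
      have hna : ¬ ∀ z : M, z ∈ m • (⊤ : Submodule R M) :=
        fun hall => hne (Submodule.eq_top_iff'.2 hall)
      push_neg at hna
      obtain ⟨z, hz⟩ := hna
      exact ⟨z, fun _ => hz⟩
    · exact ⟨0, fun h => absurd h hm⟩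
  choose y hy using hy'
  -- choose CRT coefficients
  have hc' : ∀ m : Ideal R, ∃ cm : R, m.IsMaximal →
      cm ∉ m ∧ ∀ m' : Ideal R, m'.IsMaximal → m' ≠ m → cm ∈ m' := by
    intro m
    by_cases hm : m.IsMaximal
    · set P : Ideal R := ∏ m' ∈ S.erase m, m' with hP
      have hPm : ¬ P ≤ m := by
        intro hle
        obtain ⟨m', hm'S, hm'le⟩ := (hm.isPrime.prod_le).1 hle
        have hmax' : m'.IsMaximal := (hmem m').1 (Finset.mem_erase.1 hm'S).2
        exact (Finset.mem_erase.1 hm'S).1 (hmax'.eq_of_le hm.ne_top hm'le)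
      obtain ⟨cm, hcP, hcm⟩ := SetLike.not_le_iff_exists.1 hPm
      refine ⟨cm, fun _ => ⟨hcm, ?_⟩⟩
      intro m' hm'max hne
      have hPle : P ≤ m' :=
        le_trans Ideal.prod_le_inf (Finset.inf_le (Finset.mem_erase.2 ⟨hne, (hmem m').2 hm'max⟩))
      exact hPle hcP
    · exact ⟨0, fun h => absurd h hm⟩
  choose c hc using hc'
  set x : M := ∑ m ∈ S, c m • y m with hx
  -- x is nonzero modulo every maximal ideal
  have hxnot : ∀ m : Ideal R, m.IsMaximal → x ∉ m • (⊤ : Submodule R M) := by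
    intro m hm hmem'
    have hmS : m ∈ S := (hmem m).2 hm
    have hrest : x - c m • y m ∈ m • (⊤ : Submodule R M) := by
      rw [hx, ← Finset.sum_erase_add S _ hmS, add_sub_cancel_right]
      apply Submodule.sum_mem
      intro m' hm'
      have hm'max : m'.IsMaximal := (hmem m').1 (Finset.mem_erase.1 hm').2
      have hcm' : c m' ∈ m := (hc m' hm'max).2 m hm ((Finset.mem_erase.1 hm').1).symm
      exact Submodule.smul_mem_smul hcm' Submodule.mem_top
    have hcy : c m • y m ∈ m • (⊤ : Submodule R M) := by
      have := Submodule.sub_mem _ hmem' hrest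
      simpa using this
    obtain ⟨d, i, hiI, hdi⟩ := hm.exists_inv (hc m hm).1
    have hym : y m ∈ m • (⊤ : Submodule R M) := by
      have h4 : (d * c m + i) • y m = y m := by rw [hdi, one_smul]
      rw [← h4, add_smul, mul_smul]
      exact Submodule.add_mem _ (Submodule.smul_mem _ d hcy)
        (Submodule.smul_mem_smul hiI Submodule.mem_top)
    exact hy m hm hym
  -- x generates M
  have hspan : ∀ m : Ideal R, m.IsMaximal →
      Submodule.span R {x} ⊔ m • (⊤ : Submodule R M) = ⊤ := by
    intro m hm
    rw [eq_top_iff]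
    intro z _
    obtain ⟨r, hr⟩ := aux_span e0 m (hxnot m hm) z
    have hz : z = r • x + (z - r • x) := (add_sub_cancel _ _).symm
    rw [hz]
    exact Submodule.add_mem_sup
      (Submodule.smul_mem _ r (Submodule.mem_span_singleton_self x)) hr
  have htop : Submodule.span R {x} = ⊤ := aux_nakayama _ hspan
  -- the resulting surjection R → M and its splitting
  set f := LinearMap.toSpanSingleton R M x with hf
  have hfsurj : Function.Surjective f := by
    rw [← LinearMap.range_eq_top, ← LinearMap.span_singleton_eq_range]
    exact htop
  obtain ⟨s, hs⟩ := Module.projective_lifting_property f LinearMap.id hfsurj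
  have hfs : ∀ z : M, f (s z) = z := fun z => DFunLike.congr_fun hs z
  have hann : ∀ z : M, (1 - s x) • z = 0 := by
    intro z
    obtain ⟨r, rfl⟩ := hfsurj z
    have h5 : s x • f r = f (s (f r)) := by
      calc s x • f r = s x • (r • x) := rfl
        _ = (s x * r) • x := (mul_smul _ _ _).symm
        _ = (r * s x) • x := by rw [mul_comm]
        _ = f (r • s x) := rfl
        _ = f (s (r • x)) := by rw [map_smul s r x]
        _ = f (s (f r)) := rfl
    rw [sub_smul, one_smul, h5, hfs (f r), sub_self]
  have hsx1 : s x = (1 : R) := by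
    have hT : ∀ w : M ⊗[R] M', (1 - s x) • w = 0 := by
      intro w
      induction w using TensorProduct.induction_on with
      | zero => rw [smul_zero]
      | tmul a b => rw [TensorProduct.smul_tmul', hann a, TensorProduct.zero_tmul]
      | add u v hu hv => rw [smul_add, hu, hv, add_zero]
    have h6 := congrArg e0 (hT (e0.symm 1))
    rw [map_smul, e0.apply_symm_apply, map_zero] at h6
    have h7 : 1 - s x = 0 := by simpa [smul_eq_mul] using h6
    exact (sub_eq_zero.1 h7).symm
  have hsf : s ∘ₗ f = LinearMap.id := by
    apply LinearMap.ext
    intro r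
    have hfr : f r = r • x := rfl
    show s (f r) = r
    rw [hfr, map_smul, hsx1, smul_eq_mul, mul_one]
  exact ⟨LinearEquiv.ofLinear s f hsf hs⟩
end
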